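/- Let R be a commutative ring and V an R-module equipped with pairwise commuting R-linear endomorphisms ∂_1,…,∂_r. Let W := ⊕_{α∈ℕ^r} V, whose elements are written as finite sums Σ_α m_α w^α with m_α ∈ V. Define the R-linear map φ : W → V by φ(Σ_α m_α w^α) = Σ_α ∂^α(m_α), where ∂^α := ∂_1^{α_1}∘…∘∂_r^{α_r}, and for 1 ≤ i ≤ r define D_i : W → W by D_i(Σ_α m_α w^α) = Σ_α ∂_i(m_α) w^α − Σ_α m_α w^{α+e_i}, where e_i ∈ ℕ^r is the i-th standard unit vector. Then the kernel of φ equals Σ_{i=1}^r image(D_i). -/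

import Mathlib

noncomputable section

section Aux
variable {M : Type*} [Monoid M]

lemma aux_prod_add : ∀ (r : ℕ) (pd : Fin r → M), (∀ i j, Commute (pd i) (pd j)) →
    ∀ a b : Fin r → ℕ,
    (List.ofFn fun j => pd j ^ (a j + b j)).prod =
      (List.ofFn fun j => pd j ^ a j).prod * (List.ofFn fun j => pd j ^ b j).prod := by
  intro r
  induction r with
  | zero => intro pd h a b; simp
  | succ n ih =>
    intro pd h a b
    have hcomm : Commute (pd 0 ^ b 0) (List.ofFn fun j : Fin n => pd j.succ ^ a j.succ).prod := by
      apply Commute.list_prod_right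
      intro x hx
      rw [List.mem_ofFn] at hx
      obtain ⟨k, rfl⟩ := hx
      exact ((h 0 k.succ).pow_pow _ _)
    simp only [List.ofFn_succ, List.prod_cons]
    rw [ih (fun j => pd j.succ) (fun i j => h i.succ j.succ) (fun j => a j.succ) (fun j => b j.succ),
      pow_add]
    exact hcomm.mul_mul_mul_comm _ _

lemma aux_prod_single : ∀ (r : ℕ) (pd : Fin r → M) (i : Fin r),
    (List.ofFn fun j => pd j ^ (if i = j then 1 else 0)).prod = pd i := by
  intro r
  induction r with
  | zero => intro pd i; exact i.elim0
  | succ n ih =>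
    intro pd i
    simp only [List.ofFn_succ, List.prod_cons]
    induction i using Fin.cases with
    | zero =>
      have : (List.ofFn fun j : Fin n => pd j.succ ^ (if (0 : Fin (n+1)) = j.succ then 1 else 0)).prod = 1 := by
        apply List.prod_eq_one
        intro x hx
        rw [List.mem_ofFn] at hx
        obtain ⟨k, rfl⟩ := hx
        simp [(Fin.succ_ne_zero k).symm]
      rw [if_pos rfl, pow_one, this, mul_one]
    | succ k =>
      have h0 : (if (Fin.succ k) = (0 : Fin (n+1)) then 1 else 0) = 0 := by
        simp [Fin.succ_ne_zero k]
      rw [h0, pow_zero, one_mul]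
      have := ih (fun j => pd j.succ) k
      simpa [Fin.succ_inj] using this

end Aux

/-- Let `R` be a commutative ring and `V` an `R`-module with pairwise
commuting `R`-linear endomorphisms `∂_1, …, ∂_r`.  Let `W := ⊕_{α ∈ ℕ^r} V` (encoded as
`(Fin r →₀ ℕ) →₀ V`, an element `Σ_α m_α w^α` being the finitely supported function
`α ↦ m_α`).  Let `φ : W → V` be the linear map `Σ_α m_α w^α ↦ Σ_α ∂^α(m_α)` where
`∂^α = ∂_1^{α_1} ∘ ⋯ ∘ ∂_r^{α_r}`, and for `1 ≤ i ≤ r` let `D_i : W → W` be the linear map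
`Σ_α m_α w^α ↦ Σ_α ∂_i(m_α) w^α - Σ_α m_α w^{α+e_i}`.  Then
`ker φ = Σ_{i=1}^r image (D_i)`. -/
theorem statement6 (R : Type*) [CommRing R] (V : Type*) [AddCommGroup V] [Module R V]
    (r : ℕ) (pd : Fin r → Module.End R V)
    (hcomm : ∀ i j, pd i * pd j = pd j * pd i) :
    LinearMap.ker
        (Finsupp.lsum ℕ
          (fun α : Fin r →₀ ℕ => (List.ofFn fun i => (pd i) ^ (α i)).prod) :
          ((Fin r →₀ ℕ) →₀ V) →ₗ[R] V)
      = ⨆ i : Fin r,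
          LinearMap.range
            ((Finsupp.mapRange.linearMap (pd i) :
                ((Fin r →₀ ℕ) →₀ V) →ₗ[R] ((Fin r →₀ ℕ) →₀ V))
              - Finsupp.lmapDomain V R (fun α => α + Finsupp.single i 1)) := by
  classical
  set Φ : ((Fin r →₀ ℕ) →₀ V) →ₗ[R] V :=
    (Finsupp.lsum ℕ
      (fun α : Fin r →₀ ℕ => (List.ofFn fun i => (pd i) ^ (α i)).prod)) with hΦ
  set D : Fin r → (((Fin r →₀ ℕ) →₀ V) →ₗ[R] ((Fin r →₀ ℕ) →₀ V)) :=
    fun i => (Finsupp.mapRange.linearMap (pd i)) -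
      Finsupp.lmapDomain V R (fun α => α + Finsupp.single i 1) with hD
  set S : Submodule R ((Fin r →₀ ℕ) →₀ V) := ⨆ i : Fin r, LinearMap.range (D i) with hS
  have hcomm' : ∀ i j, Commute (pd i) (pd j) := hcomm
  -- The product of powers of the `pd i`'s.
  have hL : ∀ (α : Fin r →₀ ℕ) (i : Fin r),
      (List.ofFn fun j => pd j ^ ((α + Finsupp.single i 1 : Fin r →₀ ℕ) j)).prod =
        (List.ofFn fun j => pd j ^ (α j)).prod * pd i := by
    intro α i
    have h1 : (fun j => pd j ^ ((α + Finsupp.single i 1 : Fin r →₀ ℕ) j)) =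
        fun j => pd j ^ (α j + (if i = j then 1 else 0)) := by
      funext j
      simp [Finsupp.single_apply]
    rw [h1, aux_prod_add r pd hcomm' α (fun j => if i = j then 1 else 0),
      aux_prod_single r pd i]
  have hΦs : ∀ (α : Fin r →₀ ℕ) (m : V),
      Φ (Finsupp.single α m) = (List.ofFn fun j => pd j ^ (α j)).prod m := by
    intro α m
    simp [hΦ, Finsupp.lsum_single]
  have hDs : ∀ (i : Fin r) (α : Fin r →₀ ℕ) (m : V),
      D i (Finsupp.single α m) =
        Finsupp.single α (pd i m) - Finsupp.single (α + Finsupp.single i 1) m := by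
    intro i α m
    simp [hD, Finsupp.mapDomain_single]
  -- degree additivity
  have hdeg : ∀ (α : Fin r →₀ ℕ) (i : Fin r),
      Finsupp.degree (α + Finsupp.single i 1) = Finsupp.degree α + 1 := by
    intro α i
    have h1 : Finsupp.degree (Finsupp.single i (1 : ℕ)) = 1 := by
      show ∑ j ∈ (Finsupp.single i (1 : ℕ)).support, (Finsupp.single i (1 : ℕ)) j = 1
      simp [Finsupp.degree, Finsupp.support_single_ne_zero i one_ne_zero]
    rw [Finsupp.degree_eq_weight_one] at *
    rw [map_add, h1]
  -- key reduction lemma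
  have hK : ∀ (n : ℕ) (α : Fin r →₀ ℕ), Finsupp.degree α = n → ∀ m : V,
      Finsupp.single α m -
        Finsupp.single (0 : Fin r →₀ ℕ) ((List.ofFn fun j => pd j ^ (α j)).prod m) ∈ S := by
    intro n
    induction n with
    | zero =>
      intro α hα m
      rw [Finsupp.degree_eq_zero_iff] at hα
      subst hα
      have : (List.ofFn fun j => pd j ^ ((0 : Fin r →₀ ℕ) j)).prod = 1 := by
        simp
      rw [this, Module.End.one_apply, sub_self]
      exact zero_mem S
    | succ n ih =>
      intro α hα m
      have hα0 : α ≠ 0 := by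
        intro h
        rw [h, map_zero] at hα
        exact Nat.succ_ne_zero n hα.symm
      obtain ⟨i, hi⟩ : ∃ i, α i ≠ 0 := by
        by_contra h
        push_neg at h
        exact hα0 (Finsupp.ext fun j => h j)
      set β : Fin r →₀ ℕ := α - Finsupp.single i 1 with hβ
      have hβα : β + Finsupp.single i 1 = α := by
        ext j
        simp only [hβ, Finsupp.coe_add, Finsupp.coe_tsub, Pi.add_apply, Pi.sub_apply,
          Finsupp.single_apply]
        by_cases hij : i = j
        · subst hij; simp; omega
        · simp [hij]
      have hdβ : Finsupp.degree β = n := by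
        have := hdeg β i
        rw [hβα, hα] at this
        omega
      have hmem1 : Finsupp.single α m - Finsupp.single β (pd i m) ∈ S := by
        have h1 : D i (Finsupp.single β m) =
            Finsupp.single β (pd i m) - Finsupp.single α m := by
          rw [hDs, hβα]
        have h2 : Finsupp.single β (pd i m) - Finsupp.single α m ∈ S := by
          rw [← h1]
          exact le_iSup (fun i => LinearMap.range (D i)) i ⟨_, rfl⟩
        have := neg_mem h2
        rwa [neg_sub] at this
      have hmem2 : Finsupp.single β (pd i m) -
          Finsupp.single (0 : Fin r →₀ ℕ)
            ((List.ofFn fun j => pd j ^ (β j)).prod (pd i m)) ∈ S :=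
        ih β hdβ (pd i m)
      have hprod : (List.ofFn fun j => pd j ^ (α j)).prod m =
          (List.ofFn fun j => pd j ^ (β j)).prod (pd i m) := by
        conv_lhs => rw [← hβα]
        rw [hL β i, Module.End.mul_apply]
      rw [hprod]
      have := add_mem hmem1 hmem2
      rwa [sub_add_sub_cancel] at this
  -- every element is congruent to `single 0 (Φ x)` mod `S`
  have hKx : ∀ x : (Fin r →₀ ℕ) →₀ V,
      x - Finsupp.single (0 : Fin r →₀ ℕ) (Φ x) ∈ S := by
    intro x
    induction x using Finsupp.induction with
    | zero => simp
    | single_add α m f _ _ ihf =>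
      have h1 := hK (Finsupp.degree α) α rfl m
      rw [← hΦs α m] at h1
      have := add_mem h1 ihf
      rw [map_add, Finsupp.single_add] at *
      convert this using 1
      abel
  -- now prove the two inclusions
  apply le_antisymm
  · intro x hx
    rw [LinearMap.mem_ker] at hx
    have := hKx x
    rwa [hx, Finsupp.single_zero, sub_zero] at this
  · apply iSup_le
    intro i
    rw [LinearMap.range_le_ker_iff]
    apply Finsupp.lhom_ext
    intro α m
    have h1 : Φ (D i (Finsupp.single α m)) = 0 := by
      rw [hDs, map_sub, hΦs, hΦs, hL α i, Module.End.mul_apply, sub_self]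
    simpa using h1
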